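/- (Construction of a fixed profile) Let U ≤ G and suppose (φ, ψ, id) ∈ U with ψ ≠ id, and suppose π is a prime with π^a = |ψ|_π (the π-part of the order of ψ) dividing the length of every φ-orbit on H. Then there exists a preference profile p and an element (φ̂, ψ̂, id) ∈ Stab_U(p) with ψ̂ ≠ id; hence U is not regular. -/

import Mathlib

/-- A preference profile: each individual `i : Fin h` has a linear order on the `n`
alternatives, identified with the permutation of `Fin n` mapping ranks to alternatives. -/
abbrev Profile (h n : Nat) := Fin h → Equiv.Perm (Fin n)

/-- The order-reversing permutation `ρ₀`. -/
def rho0 (n : Nat) : Equiv.Perm (Fin n) := Fin.revPerm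

/-- The subgroup `Ω = {id, ρ₀}` of `S_n` (generated by `ρ₀`, which has order 2). -/
def Omega (n : Nat) : Subgroup (Equiv.Perm (Fin n)) := Subgroup.zpowers (rho0 n)

/-- `ρ₀` as an element of `Ω`. -/
def omegaRho0 (n : Nat) : Omega n := ⟨rho0 n, Subgroup.mem_zpowers _⟩

/-- The group `G = S_h × S_n × Ω`. -/
abbrev GG (h n : Nat) := Equiv.Perm (Fin h) × Equiv.Perm (Fin n) × (Omega n)

/-- The action of `(φ, ψ, ρ) ∈ G` on a profile: `(p^{(φ,ψ,ρ)})_i = ψ p_{φ⁻¹(i)} ρ`. -/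
def act {h n : Nat} (g : GG h n) (p : Profile h n) : Profile h n :=
  fun i => g.2.1 * p (g.1⁻¹ i) * (g.2.2 : Equiv.Perm (Fin n))

/-- A rule `F` is `U`-symmetric if `F(p^{(φ,ψ,ρ)}) = ψ F(p) ρ` for all `p` and `(φ,ψ,ρ) ∈ U`. -/
def USymm {h n : Nat} (U : Set (GG h n)) (F : Profile h n → Equiv.Perm (Fin n)) : Prop :=
  ∀ p : Profile h n, ∀ g ∈ U, F (act g p) = g.2.1 * F p * (g.2.2 : Equiv.Perm (Fin n))

/-- `S₁^U(p) = { q : ψ q ρ = q for all (φ,ψ,ρ) in the stabilizer of p in U }`. -/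
def S1set {h n : Nat} (U : Set (GG h n)) (p : Profile h n) : Set (Equiv.Perm (Fin n)) :=
  {q | ∀ g ∈ U, act g p = p → g.2.1 * q * (g.2.2 : Equiv.Perm (Fin n)) = q}

/-- Regularity of `U`: for every profile `p` there is `ψ*` conjugate to `ρ₀` with
`Stab_U(p) ⊆ (S_h × {id} × {id}) ∪ (S_h × {ψ*} × {ρ₀})`. -/
def Regular {h n : Nat} (U : Set (GG h n)) : Prop :=
  ∀ p : Profile h n, ∃ ψs : Equiv.Perm (Fin n), IsConj (rho0 n) ψs ∧
    ∀ g ∈ U, act g p = p →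
      (g.2.1 = 1 ∧ (g.2.2 : Equiv.Perm (Fin n)) = 1) ∨
      (g.2.1 = ψs ∧ (g.2.2 : Equiv.Perm (Fin n)) = rho0 n)

/-- Number of individuals strictly preferring `x` to `y` in profile `p`
(smaller rank = better, since permutations send ranks to alternatives). -/
def prefCount {h n : Nat} (p : Profile h n) (x y : Fin n) : Nat :=
  (Finset.univ.filter fun i => (p i)⁻¹ x < (p i)⁻¹ y).card

/-- `C_ν(p)`: linear orders consistent with the `ν`-majority principle applied to `p`. -/
def Cset {h n : Nat} (p : Profile h n) (ν : Nat) : Set (Equiv.Perm (Fin n)) :=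
  {q | ∀ x y : Fin n, ν ≤ prefCount p x y → q⁻¹ x < q⁻¹ y}

/-- `ν(p)`: the minimal majority threshold `ν ∈ ℕ ∩ (h/2, h]` with `C_ν(p) ≠ ∅`. -/
noncomputable def nuMin {h n : Nat} (p : Profile h n) : Nat :=
  sInf {ν : Nat | h < 2 * ν ∧ ν ≤ h ∧ (Cset p ν).Nonempty}

/-- minimal majority rule. -/
def MinMaj {h n : Nat} (F : Profile h n → Equiv.Perm (Fin n)) : Prop :=
  ∀ p : Profile h n, F p ∈ Cset p (nuMin p)

/-- `gcd(T(φ))`: the gcd of the lengths of the orbits (cycles) of `φ`. -/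
noncomputable def gcdOrbits {h : Nat} (phi : Equiv.Perm (Fin h)) : Nat :=
  Finset.univ.gcd fun i => Function.minimalPeriod (⇑phi) i

theorem stmt10 {h n : Nat} (hh : 2 ≤ h) (hn : 2 ≤ n) (U : Subgroup (GG h n))
    (φ : Equiv.Perm (Fin h)) (ψ : Equiv.Perm (Fin n))
    (hmem : ((φ, ψ, (1 : Omega n)) : GG h n) ∈ U) (hψ : ψ ≠ 1)
    (π a : Nat) (hπ : π.Prime) (ha : 1 ≤ a)
    (hpart : (orderOf ψ).factorization π = a)
    (hdvd : ∀ i : Fin h, π ^ a ∣ Function.minimalPeriod (⇑φ) i) :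
    (∃ (p : Profile h n) (g : GG h n), g ∈ U ∧ act g p = p ∧
      g.2.1 ≠ 1 ∧ (g.2.2 : Equiv.Perm (Fin n)) = 1) ∧
    ¬ Regular (U : Set (GG h n)) := by
  classical
  -- rho0 is not the identity
  have hρ0 : rho0 n ≠ 1 := by
    intro hcon
    have hv := congrArg (fun e : Equiv.Perm (Fin n) => (e ⟨0, by omega⟩ : Fin n).val) hcon
    simp [rho0, Fin.rev] at hv
    omega
  set m := orderOf ψ with hmdef
  have hm0 : m ≠ 0 := (orderOf_pos ψ).ne'
  have hdvdm : π ^ a ∣ m := by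
    rw [← hpart]; exact Nat.ordProj_dvd m π
  set m' := m / π ^ a with hm'def
  have hmul : π ^ a * m' = m := Nat.mul_div_cancel' hdvdm
  have hcop : Nat.Coprime (π ^ a) m' := by
    have := Nat.coprime_ordCompl hπ hm0
    rw [hpart] at this
    exact this.pow_left a
  set σ : Equiv.Perm (Fin h) := φ ^ m' with hσdef
  set ψh : Equiv.Perm (Fin n) := ψ ^ m' with hψhdef
  have hψhpow : ψh ^ (π ^ a) = 1 := by
    rw [hψhdef, ← pow_mul, mul_comm, hmul, hmdef, pow_orderOf_eq_one]
  have horderdvd : orderOf ψh ∣ π ^ a := orderOf_dvd_of_pow_eq_one hψhpow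
  have hπa2 : 2 ≤ π ^ a := by
    calc 2 ≤ π := hπ.two_le
    _ ≤ π ^ a := Nat.le_self_pow (by omega) π
  have hψh1 : ψh ≠ 1 := by
    intro hcon
    have hdm : m ∣ m' := orderOf_dvd_of_pow_eq_one (hψhdef ▸ hcon)
    have hm'0 : m' ≠ 0 := by
      intro h0; rw [h0, mul_zero] at hmul; exact hm0 hmul.symm
    have hle : m ≤ m' := Nat.le_of_dvd (Nat.pos_of_ne_zero hm'0) hdm
    have hmp : 0 < m' := Nat.pos_of_ne_zero hm'0
    nlinarith [hmul, hπa2, hle, hmp]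
  -- π^a divides all σ-orbit lengths
  have horb : ∀ x : Fin h, π ^ a ∣ Function.minimalPeriod (⇑σ) x := by
    intro x
    set L' := Function.minimalPeriod (⇑σ) x with hL'
    have hper : Function.IsPeriodicPt (⇑σ) L' x := Function.isPeriodicPt_minimalPeriod _ _
    have hper2 : Function.IsPeriodicPt (⇑φ) (m' * L') x := by
      show (⇑φ)^[m' * L'] x = x
      rw [← Equiv.Perm.coe_pow, pow_mul]
      exact hper
    have hLdvd : Function.minimalPeriod (⇑φ) x ∣ m' * L' := hper2.minimalPeriod_dvd
    exact hcop.dvd_of_dvd_mul_left ((hdvd x).trans hLdvd)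
  -- orbit representatives
  let s : Setoid (Fin h) := Equiv.Perm.SameCycle.setoid σ
  let r : Fin h → Fin h := fun i => (Quotient.mk s i).out
  have hr1 : ∀ i, Equiv.Perm.SameCycle σ (r i) i := fun i => Quotient.mk_out i
  have hr2 : ∀ i, r (σ i) = r i := by
    intro i
    have hq : (Quotient.mk s (σ i)) = Quotient.mk s i :=
      Quotient.sound (show Equiv.Perm.SameCycle σ (σ i) i from ⟨-1, by simp⟩)
    show (Quotient.mk s (σ i)).out = (Quotient.mk s i).out
    rw [hq]
  have hk : ∀ i, ∃ t : ℕ, (σ ^ t) (r i) = i := by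
    intro i
    obtain ⟨t, _, ht⟩ := (hr1 i).exists_pow_eq'
    exact ⟨t, ht⟩
  let k : Fin h → ℕ := fun i => (hk i).choose
  have hkspec : ∀ i, (σ ^ (k i)) (r i) = i := fun i => (hk i).choose_spec
  -- key congruence
  have key : ∀ (x : Fin h) (u v : ℕ), u ≤ v → (σ ^ u) x = (σ ^ v) x → ψh ^ u = ψh ^ v := by
    intro x u v hle huv
    have hfix : (σ ^ (v - u)) x = x := by
      apply (σ ^ u).injective
      rw [← Equiv.Perm.mul_apply, ← pow_add, Nat.add_sub_cancel' hle]
      exact huv.symm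
    have hp : Function.IsPeriodicPt (⇑σ) (v - u) x := by
      show (⇑σ)^[v - u] x = x
      rw [← Equiv.Perm.coe_pow]
      exact hfix
    have hdvd2 : orderOf ψh ∣ v - u := horderdvd.trans ((horb x).trans hp.minimalPeriod_dvd)
    exact pow_eq_pow_iff_modEq.mpr ((Nat.modEq_iff_dvd' hle).mpr hdvd2)
  have key' : ∀ (x : Fin h) (u v : ℕ), (σ ^ u) x = (σ ^ v) x → ψh ^ u = ψh ^ v := by
    intro x u v huv
    rcases le_total u v with hle | hle
    · exact key x u v hle huv
    · exact (key x v u hle huv.symm).symm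
  -- the profile
  let p : Profile h n := fun i => ψh ^ (k i)
  let g : GG h n := ((φ, ψ, (1 : Omega n)) : GG h n) ^ m'
  have hgU : g ∈ U := pow_mem hmem m'
  have hg1 : g.1 = σ := by simp [g, hσdef]
  have hg21 : g.2.1 = ψh := by simp [g, hψhdef]
  have hg22 : (g.2.2 : Equiv.Perm (Fin n)) = 1 := by simp [g]
  have hfix : act g p = p := by
    funext i
    show g.2.1 * p (g.1⁻¹ i) * (g.2.2 : Equiv.Perm (Fin n)) = p i
    rw [hg1, hg21, hg22, mul_one]
    show ψh * ψh ^ (k (σ⁻¹ i)) = ψh ^ (k i)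
    have h1 : (σ ^ (k (σ⁻¹ i) + 1)) (r i) = (σ ^ (k i)) (r i) := by
      have hri : r (σ⁻¹ i) = r i := by
        have h' := hr2 (σ⁻¹ i)
        rw [show σ (σ⁻¹ i) = i from σ.apply_symm_apply i] at h'
        exact h'.symm
      conv_lhs => rw [pow_succ', Equiv.Perm.mul_apply, ← hri, hkspec (σ⁻¹ i)]
      rw [show σ (σ⁻¹ i) = i from σ.apply_symm_apply i]; exact (hkspec i).symm
    have h2 := key' (r i) (k (σ⁻¹ i) + 1) (k i) h1
    rw [← h2, pow_succ']
  have main : ∃ (p : Profile h n) (g : GG h n), g ∈ U ∧ act g p = p ∧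
      g.2.1 ≠ 1 ∧ (g.2.2 : Equiv.Perm (Fin n)) = 1 :=
    ⟨p, g, hgU, hfix, by rw [hg21]; exact hψh1, hg22⟩
  refine ⟨main, ?_⟩
  intro hreg
  obtain ⟨p', g', hgU', hfix', hg1', hg2'⟩ := main
  obtain ⟨ψs, _, hstab⟩ := hreg p'
  rcases hstab g' hgU' hfix' with ⟨hA, _⟩ | ⟨_, hB⟩
  · exact hg1' hA
  · exact hρ0 (hg2' ▸ hB).symm
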